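/- arXiv:math-ph/0609088 — 2 statements merged into one kernel-verified Lean document; each statement's English description precedes it below -/
import Mathlib

section
/- Conversely, if ψ ∈ D(e^{cA/2}) for a self-adjoint operator A and c > 0, then z ↦ ⟨ψ, e^{izA}ψ⟩ is holomorphic on the strip {z ∈ ℂ : 0 < Im z < c} and continuous on its closure, with |⟨ψ, e^{izA}ψ⟩| ≤ ‖ψ‖·‖e^{(Im z)A/2}ψ‖·(bounded uniformly on the strip by ‖ψ‖² + ‖e^{cA/2}ψ‖²). -/
open MeasureTheory

private lemma norm_exp_Izl (z : ℂ) (l : ℝ) :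
    ‖Complex.exp (Complex.I * z * l)‖ = Real.exp (-(z.im * l)) := by
  rw [Complex.norm_exp]
  congr 1
  simp [Complex.mul_re, Complex.mul_im]

private lemma exp_bound_strip {c : ℝ} {z : ℂ} (h0 : 0 ≤ z.im) (h1 : z.im ≤ c) (l : ℝ) :
    Real.exp (-(z.im * l)) ≤ 1 + Real.exp (-(c * l)) := by
  rcases le_or_gt 0 l with hl | hl
  · have : Real.exp (-(z.im * l)) ≤ 1 := by
      rw [← Real.exp_zero]
      exact Real.exp_le_exp.2 (by nlinarith)
    nlinarith [Real.exp_pos (-(c * l))]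
  · have : Real.exp (-(z.im * l)) ≤ Real.exp (-(c * l)) :=
      Real.exp_le_exp.2 (by nlinarith)
    linarith

private lemma integrable_abs_mul_exp (μ : Measure ℝ) [IsFiniteMeasure μ] {a c : ℝ}
    (ha : 0 < a) (hac : a < c)
    (hdom : Integrable (fun l : ℝ => Real.exp (-(c * l))) μ) :
    Integrable (fun l : ℝ => |l| * Real.exp (-(a * l))) μ := by
  have hg : Integrable (fun l : ℝ => a⁻¹ + (c - a)⁻¹ * Real.exp (-(c * l))) μ :=
    (integrable_const _).add (hdom.const_mul _)
  refine hg.mono ?_ (Filter.Eventually.of_forall fun l => ?_)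
  · exact ((continuous_abs.mul (by continuity)).aestronglyMeasurable)
  · have key : ∀ x : ℝ, 0 ≤ x → x * Real.exp (-x) ≤ 1 := by
      intro x hx
      have h1 : x ≤ Real.exp x := (Real.add_one_le_exp x).trans' (by linarith)
      have := Real.exp_pos (-x)
      calc x * Real.exp (-x) ≤ Real.exp x * Real.exp (-x) := by nlinarith
        _ = 1 := by rw [← Real.exp_add]; simp
    rw [Real.norm_eq_abs, abs_of_nonneg (by positivity), Real.norm_eq_abs,
      abs_of_nonneg (show (0:ℝ) ≤ a⁻¹ + (c - a)⁻¹ * Real.exp (-(c * l)) by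
        have hca : (0:ℝ) < c - a := by linarith
        positivity)]
    rcases le_or_gt 0 l with hl | hl
    · have h2 : (a * l) * Real.exp (-(a * l)) ≤ 1 := key _ (by positivity)
      have h3 : |l| * Real.exp (-(a * l)) ≤ a⁻¹ := by
        rw [abs_of_nonneg hl]
        rw [← mul_le_mul_iff_of_pos_left ha, ← mul_assoc]
        calc a * l * Real.exp (-(a * l)) ≤ 1 := h2
          _ = a * a⁻¹ := by field_simp
      have h4 : (0:ℝ) ≤ (c - a)⁻¹ * Real.exp (-(c * l)) := by
        have hca : (0:ℝ) < c - a := by linarith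
        positivity
      linarith
    · have hl' : 0 ≤ -l := by linarith
      have h2 : ((c - a) * (-l)) * Real.exp (-((c - a) * (-l))) ≤ 1 :=
        key _ (by nlinarith)
      have heq : Real.exp (-(a * l)) = Real.exp (-((c - a) * (-l))) * Real.exp (-(c * l)) := by
        rw [← Real.exp_add]; ring_nf
      have h3 : |l| * Real.exp (-(a * l)) ≤ (c - a)⁻¹ * Real.exp (-(c * l)) := by
        rw [abs_of_neg hl, heq, ← mul_assoc]
        have hca : 0 < c - a := by linarith
        have h5 : -l * Real.exp (-((c - a) * (-l))) ≤ (c - a)⁻¹ := by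
          rw [← mul_le_mul_iff_of_pos_left hca, ← mul_assoc]
          calc (c - a) * (-l) * Real.exp (-((c - a) * (-l))) ≤ 1 := h2
            _ = (c - a) * (c - a)⁻¹ := by field_simp
        have := Real.exp_pos (-(c * l))
        nlinarith
      have ha' : (0:ℝ) < a⁻¹ := by positivity
      linarith

/-- Converse spectral-theorem step: let `μ` be the spectral measure of a
self-adjoint operator `A` in the vector `ψ`.  If `ψ ∈ D(e^{cA/2})`, i.e.
`∫ e^{-cλ} dμ(λ) < ∞`, then `z ↦ ⟨ψ, e^{izA}ψ⟩ = ∫ e^{izλ} dμ(λ)` is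
holomorphic on the open strip `0 < Im z < c`, continuous on its closure, and
uniformly bounded there by `‖ψ‖² + ‖e^{cA/2}ψ‖² = μ(ℝ) + ∫ e^{-cλ} dμ`. -/
theorem strip_analyticity_of_domain_exp
    (μ : Measure ℝ) [IsFiniteMeasure μ] (c : ℝ) (hc : 0 < c)
    (hdom : Integrable (fun l : ℝ => Real.exp (-(c * l))) μ) :
    DifferentiableOn ℂ
      (fun z : ℂ => ∫ l, Complex.exp (Complex.I * z * l) ∂μ)
      {z : ℂ | 0 < z.im ∧ z.im < c} ∧
    ContinuousOn
      (fun z : ℂ => ∫ l, Complex.exp (Complex.I * z * l) ∂μ)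
      {z : ℂ | 0 ≤ z.im ∧ z.im ≤ c} ∧
    ∀ z : ℂ, 0 ≤ z.im → z.im ≤ c →
      ‖∫ l, Complex.exp (Complex.I * z * l) ∂μ‖ ≤
        (μ Set.univ).toReal + ∫ l, Real.exp (-(c * l)) ∂μ := by
  have hgint : Integrable (fun l : ℝ => 1 + Real.exp (-(c * l))) μ :=
    (integrable_const _).add hdom
  have hmeas : ∀ z : ℂ, AEStronglyMeasurable (fun l : ℝ => Complex.exp (Complex.I * z * l)) μ :=
    fun z => (Complex.continuous_exp.comp (by continuity)).aestronglyMeasurable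
  have hFint : ∀ z : ℂ, 0 ≤ z.im → z.im ≤ c →
      Integrable (fun l : ℝ => Complex.exp (Complex.I * z * l)) μ := by
    intro z h0 h1
    refine hgint.mono (hmeas z) (Filter.Eventually.of_forall fun l => ?_)
    rw [norm_exp_Izl]
    refine (exp_bound_strip h0 h1 l).trans (le_abs_self _)
  refine ⟨?_, ?_, ?_⟩
  · -- differentiability
    intro z₀ hz₀
    obtain ⟨h0, h1⟩ := hz₀
    set ε := min z₀.im (c - z₀.im) / 2 with hε
    have hεpos : 0 < ε := by
      have : 0 < min z₀.im (c - z₀.im) := lt_min h0 (by linarith)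
      positivity
    set a := z₀.im - ε with ha
    set b := z₀.im + ε with hb
    have hεle1 : ε ≤ z₀.im / 2 := by
      simp only [hε]; have := min_le_left z₀.im (c - z₀.im); linarith
    have hεle2 : ε ≤ (c - z₀.im) / 2 := by
      simp only [hε]; have := min_le_right z₀.im (c - z₀.im); linarith
    have hapos : 0 < a := by simp only [ha]; linarith
    have hblt : b < c := by simp only [hb]; linarith
    have hia := integrable_abs_mul_exp μ hapos (by linarith) hdom
    have hib := integrable_abs_mul_exp μ (show (0:ℝ) < b by linarith) hblt hdom
    have hbound_int : Integrable
        (fun l : ℝ => |l| * Real.exp (-(a * l)) + |l| * Real.exp (-(b * l))) μ := hia.add hib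
    have key := hasDerivAt_integral_of_dominated_loc_of_deriv_le (μ := μ)
      (F := fun z (l : ℝ) => Complex.exp (Complex.I * z * l))
      (F' := fun z (l : ℝ) => Complex.exp (Complex.I * z * l) * (Complex.I * l))
      (x₀ := z₀)
      (bound := fun l : ℝ => |l| * Real.exp (-(a * l)) + |l| * Real.exp (-(b * l)))
      (Metric.ball_mem_nhds z₀ hεpos)
      (Filter.Eventually.of_forall fun z => hmeas z)
      (hFint z₀ h0.le h1.le)
      (((Complex.continuous_exp.comp (by continuity)).mul (by continuity)).aestronglyMeasurable)
      ?_ hbound_int ?_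
    · exact key.2.differentiableAt.differentiableWithinAt
    · refine Filter.Eventually.of_forall fun l => fun z hz => ?_
      have him : |z.im - z₀.im| < ε := by
        have h1' : |(z - z₀).im| ≤ ‖z - z₀‖ := Complex.abs_im_le_norm _
        have h2' : ‖z - z₀‖ < ε := by
          rwa [Metric.mem_ball, dist_eq_norm] at hz
        simpa [Complex.sub_im] using h1'.trans_lt h2'
      have hza : a ≤ z.im := by
        have := abs_lt.1 him; simp only [ha]; linarith [this.1]
      have hzb : z.im ≤ b := by
        have := abs_lt.1 him; simp only [hb]; linarith [this.2]
      rw [norm_mul, norm_exp_Izl]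
      have hIl : ‖Complex.I * (l:ℂ)‖ = |l| := by
        simp
      rw [hIl]
      have hexp : Real.exp (-(z.im * l)) ≤ Real.exp (-(a * l)) + Real.exp (-(b * l)) := by
        rcases le_or_gt 0 l with hl | hl
        · have h1' : Real.exp (-(z.im * l)) ≤ Real.exp (-(a * l)) :=
            Real.exp_le_exp.2 (by nlinarith)
          linarith [Real.exp_pos (-(b * l))]
        · have h1' : Real.exp (-(z.im * l)) ≤ Real.exp (-(b * l)) :=
            Real.exp_le_exp.2 (by nlinarith)
          linarith [Real.exp_pos (-(a * l))]
      calc Real.exp (-(z.im * l)) * |l|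
          ≤ (Real.exp (-(a * l)) + Real.exp (-(b * l))) * |l| := by
            exact mul_le_mul_of_nonneg_right hexp (abs_nonneg l)
        _ = |l| * Real.exp (-(a * l)) + |l| * Real.exp (-(b * l)) := by ring
    · refine Filter.Eventually.of_forall fun l => fun z _ => ?_
      have h1' : HasDerivAt (fun z : ℂ => Complex.I * z * l) (Complex.I * l) z := by
        have : HasDerivAt (fun z : ℂ => z) 1 z := hasDerivAt_id z
        simpa [mul_comm, mul_assoc, mul_left_comm] using
          ((this.const_mul Complex.I).mul_const (l : ℂ))
      exact h1'.cexp
  · -- continuity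
    intro z hz
    obtain ⟨h0, h1⟩ := hz
    have : Filter.Tendsto (fun z' : ℂ => ∫ l, Complex.exp (Complex.I * z' * l) ∂μ)
        (nhdsWithin z {z : ℂ | 0 ≤ z.im ∧ z.im ≤ c})
        (nhds (∫ l, Complex.exp (Complex.I * z * l) ∂μ)) := by
      refine tendsto_integral_filter_of_dominated_convergence
        (fun l : ℝ => 1 + Real.exp (-(c * l)))
        (Filter.Eventually.of_forall fun z' => hmeas z') ?_ hgint ?_
      · filter_upwards [self_mem_nhdsWithin] with z' hz'
        refine Filter.Eventually.of_forall fun l => ?_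
        rw [norm_exp_Izl]
        exact exp_bound_strip hz'.1 hz'.2 l
      · refine Filter.Eventually.of_forall fun l => ?_
        have hcont : Continuous fun z' : ℂ => Complex.exp (Complex.I * z' * l) :=
          Complex.continuous_exp.comp (by continuity)
        exact (hcont.tendsto z).mono_left nhdsWithin_le_nhds
    exact this
  · -- bound
    intro z h0 h1
    have hb := norm_integral_le_of_norm_le hgint
      (Filter.Eventually.of_forall fun l => by
        rw [norm_exp_Izl]; exact exp_bound_strip h0 h1 l)
    refine hb.trans_eq ?_
    rw [integral_add (integrable_const _) hdom, integral_const, smul_eq_mul, mul_one]; rfl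
end

section
/- Let H be a complex Hilbert space and ρ a bounded nonnegative self-adjoint operator on H. Then the map h ↦ exp(−(1/4)⟨h, (1+2ρ)h⟩) on H is a function of positive type with respect to the Weyl relations, i.e., for any h₁,…,h_n ∈ H and c₁,…,c_n ∈ ℂ, the matrix M_{jk} = c̄_j c_k exp(−(1/4)⟨h_j−h_k, (1+2ρ)(h_j−h_k)⟩ − (i/2) Im⟨h_j,h_k⟩) is positive semidefinite. -/
open scoped ComplexOrder
open Matrix Finset Nat

namespace QuasifreeAux

variable {m : Type*} [Fintype m] [DecidableEq m]

/-- Schur product theorem over ℂ. -/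
lemma hadamard_psd {A B : Matrix m m ℂ} (hA : A.PosSemidef) (hB : B.PosSemidef) :
    (A ⊙ B).PosSemidef := by
  exact hA.hadamard hB

lemma rankOne_psd (d : m → ℂ) :
    (Matrix.of fun j k => (starRingEnd ℂ) (d j) * d k).PosSemidef := by
  refine Matrix.PosSemidef.of_dotProduct_mulVec_nonneg ?_ (fun x => ?_)
  · ext j k
    simp only [conjTranspose_apply, Matrix.of_apply, star_mul', RCLike.star_def,
      Complex.conj_conj]
    ring
  · have key : star x ⬝ᵥ (Matrix.of fun j k => (starRingEnd ℂ) (d j) * d k) *ᵥ x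
        = star (∑ j, d j * x j) * (∑ j, d j * x j) := by
      simp only [dotProduct, mulVec, Matrix.of_apply, Pi.star_apply, Finset.mul_sum,
        Finset.sum_mul, RCLike.star_def, map_sum]
      rw [Finset.sum_comm]
      refine Finset.sum_congr rfl fun j _ => Finset.sum_congr rfl fun k _ => ?_
      simp only [_root_.map_mul]
      ring
    rw [key]
    exact star_mul_self_nonneg _

lemma hadamard_pow_psd {B : Matrix m m ℂ} (hB : B.PosSemidef) (p : ℕ) :
    (Matrix.of fun j k => B j k ^ p).PosSemidef := by
  induction p with
  | zero =>
      have h1 := rankOne_psd (fun _ : m => (1 : ℂ))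
      have he : (Matrix.of fun j k : m => B j k ^ 0)
          = Matrix.of fun j k : m => (starRingEnd ℂ) ((fun _ : m => (1:ℂ)) j) *
              (fun _ : m => (1:ℂ)) k := by
        ext j k; simp
      rw [he]; exact h1
  | succ p ih =>
      have he : (Matrix.of fun j k : m => B j k ^ (p + 1))
          = (Matrix.of fun j k : m => B j k ^ p) ⊙ B := by
        ext j k; simp [Matrix.hadamard_apply, pow_succ]
      rw [he]; exact QuasifreeAux.hadamard_psd ih hB

lemma exp_entrywise_psd {B : Matrix m m ℂ} (hB : B.PosSemidef) :
    (Matrix.of fun j k => Complex.exp (B j k)).PosSemidef := by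
  have hexp : ∀ z : ℂ, Complex.exp z = ∑' p : ℕ, z ^ p / (p ! : ℂ) := by
    intro z
    rw [Complex.exp_eq_exp_ℂ, NormedSpace.exp_eq_tsum_div]
  refine Matrix.PosSemidef.of_dotProduct_mulVec_nonneg ?_ (fun x => ?_)
  · ext j k
    simp only [conjTranspose_apply, Matrix.of_apply, RCLike.star_def, ← Complex.exp_conj]
    congr 1
    exact hB.1.apply j k
  · have hsum : ∀ j k : m, Summable fun p : ℕ =>
        star (x j) * (B j k ^ p / (p ! : ℂ)) * x k := by
      intro j k
      exact ((NormedSpace.expSeries_div_summable (B j k)).mul_left (star (x j))).mul_right (x k)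
    have key : star x ⬝ᵥ (Matrix.of fun j k => Complex.exp (B j k)) *ᵥ x
        = ∑' p : ℕ, ∑ j, ∑ k, star (x j) * (B j k ^ p / (p ! : ℂ)) * x k := by
      simp only [dotProduct, mulVec, Matrix.of_apply, Pi.star_apply, Finset.mul_sum]
      rw [Summable.tsum_finsetSum (fun j _ => summable_sum fun k _ => hsum j k)]
      refine Finset.sum_congr rfl fun j _ => ?_
      rw [Summable.tsum_finsetSum (fun k _ => hsum j k)]
      refine Finset.sum_congr rfl fun k _ => ?_
      rw [hexp (B j k),
        ← (NormedSpace.expSeries_div_summable (B j k)).tsum_mul_right (x k),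
        ← ((NormedSpace.expSeries_div_summable (B j k)).mul_right (x k)).tsum_mul_left
          (star (x j))]
      exact tsum_congr fun p => by ring
    rw [key]
    refine tsum_nonneg fun p => ?_
    have hterm : (∑ j, ∑ k, star (x j) * (B j k ^ p / (p ! : ℂ)) * x k)
        = ((p ! : ℂ))⁻¹ * (star x ⬝ᵥ (Matrix.of fun j k => B j k ^ p) *ᵥ x) := by
      simp only [dotProduct, mulVec, Matrix.of_apply, Pi.star_apply, Finset.mul_sum]
      refine Finset.sum_congr rfl fun j _ => Finset.sum_congr rfl fun k _ => ?_
      rw [div_eq_mul_inv]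
      ring
    rw [hterm]
    have h1 : (0:ℂ) ≤ ((p ! : ℂ))⁻¹ := by
      have hc : ((p ! : ℂ)) = ((p ! : ℝ) : ℂ) := by push_cast; ring
      rw [hc, ← Complex.ofReal_inv]
      exact Complex.zero_le_real.mpr (inv_nonneg.mpr (Nat.cast_nonneg _))
    exact mul_nonneg h1 ((hadamard_pow_psd hB p).dotProduct_mulVec_nonneg x)



lemma gram_psd {H : Type*} [NormedAddCommGroup H] [InnerProductSpace ℂ H]
    (T : H →L[ℂ] H) (hT : ∀ x y : H, (inner ℂ (T x) y : ℂ) = inner ℂ x (T y))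
    (hTpos : ∀ u : H, 0 ≤ (inner ℂ u (T u) : ℂ).re) (v : m → H) :
    (Matrix.of fun j k => (inner ℂ (v j) (T (v k)) : ℂ)).PosSemidef := by
  refine Matrix.PosSemidef.of_dotProduct_mulVec_nonneg ?_ (fun x => ?_)
  · ext j k
    simp only [conjTranspose_apply, Matrix.of_apply, RCLike.star_def]
    rw [inner_conj_symm]
    exact hT _ _
  · have key : star x ⬝ᵥ (Matrix.of fun j k => (inner ℂ (v j) (T (v k)) : ℂ)) *ᵥ x
        = (inner ℂ (∑ j, x j • v j) (T (∑ k, x k • v k)) : ℂ) := by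
      rw [map_sum]
      simp only [dotProduct, mulVec, Matrix.of_apply, Pi.star_apply, Finset.mul_sum,
        _root_.map_smul, inner_sum, sum_inner, inner_smul_left, inner_smul_right,
        RCLike.star_def]
      rw [Finset.sum_comm]
      refine Finset.sum_congr rfl fun j _ => Finset.sum_congr rfl fun k _ => by ring
    rw [key]
    set u := ∑ k, x k • v k with hu
    have him : (starRingEnd ℂ) (inner ℂ u (T u) : ℂ) = (inner ℂ u (T u) : ℂ) := by
      rw [inner_conj_symm]
      exact hT u u
    rw [Complex.le_def]
    refine ⟨by simpa using hTpos u, ?_⟩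
    rw [Complex.zero_im]
    exact (Complex.conj_eq_iff_im.mp him).symm

end QuasifreeAux

set_option maxHeartbeats 1000000 in
/-- Positivity of the quasi-free thermal state on the Weyl algebra: for a
bounded nonnegative self-adjoint operator `ρ` on a complex Hilbert space `H`,
any `h₁,…,hₙ ∈ H` and `c₁,…,cₙ ∈ ℂ`, the matrix
`M j k = conj (c j) * c k * exp (-(1/4)⟨h j - h k, (1+2ρ)(h j - h k)⟩
  - (i/2) Im ⟨h j, h k⟩)` is positive semidefinite. -/
theorem quasifree_state_positive
    {H : Type*} [NormedAddCommGroup H] [InnerProductSpace ℂ H] [CompleteSpace H]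
    (ρ : H →L[ℂ] H) (hsa : IsSelfAdjoint ρ)
    (hpos : ∀ h : H, 0 ≤ (inner ℂ h (ρ h) : ℂ).re)
    (n : ℕ) (h : Fin n → H) (c : Fin n → ℂ) :
    (Matrix.of fun j k : Fin n =>
      (starRingEnd ℂ) (c j) * c k *
        Complex.exp (-(1 / 4 : ℂ) *
            (inner ℂ (h j - h k) ((ContinuousLinearMap.id ℂ H + 2 • ρ) (h j - h k)) : ℂ)
          - (Complex.I / 2) * ((inner ℂ (h j) (h k) : ℂ).im : ℂ))).PosSemidef := by
  classical
  have hid : IsSelfAdjoint (ContinuousLinearMap.id ℂ H) := by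
    rw [← ContinuousLinearMap.one_def]; exact IsSelfAdjoint.one _
  have h2 : (starRingEnd ℂ) ((2:ℂ)⁻¹) = (2:ℂ)⁻¹ := by rw [map_inv₀, Complex.conj_ofNat]
  have hhalf : ((2:ℂ))⁻¹ = (((2:ℝ)⁻¹ : ℝ) : ℂ) := by push_cast; ring
  set A : H →L[ℂ] H := ContinuousLinearMap.id ℂ H + 2 • ρ with hA
  set T₁ : H →L[ℂ] H := (2:ℂ)⁻¹ • ρ with hT₁
  set T₂ : H →L[ℂ] H := (2:ℂ)⁻¹ • (ContinuousLinearMap.id ℂ H + ρ) with hT₂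
  have hsym : ∀ x y : H, (inner ℂ (ρ x) y : ℂ) = inner ℂ x (ρ y) := fun x y =>
    hsa.isSymmetric x y
  have hT₁sa : ∀ x y : H, (inner ℂ (T₁ x) y : ℂ) = inner ℂ x (T₁ y) := by
    intro x y
    rw [hT₁]
    simp only [ContinuousLinearMap.smul_apply, inner_smul_left, inner_smul_right,
      RCLike.star_def]
    rw [h2, hsym]
  have hT₂sa : ∀ x y : H, (inner ℂ (T₂ x) y : ℂ) = inner ℂ x (T₂ y) := by
    intro x y
    rw [hT₂]
    simp only [ContinuousLinearMap.smul_apply, inner_smul_left, inner_smul_right,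
      ContinuousLinearMap.add_apply, ContinuousLinearMap.id_apply, inner_add_left,
      inner_add_right, hsym, RCLike.star_def]
    rw [h2]
  have hAsa : ∀ x y : H, (inner ℂ (A x) y : ℂ) = inner ℂ x (A y) := by
    intro x y
    rw [hA]
    simp only [two_smul, ContinuousLinearMap.add_apply, ContinuousLinearMap.id_apply,
      inner_add_left, inner_add_right, hsym]
  have hpos₁ : ∀ u : H, 0 ≤ (inner ℂ u (T₁ u) : ℂ).re := by
    intro u
    rw [hT₁]
    simp only [ContinuousLinearMap.smul_apply, inner_smul_right, hhalf,
      Complex.re_ofReal_mul]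
    exact mul_nonneg (by norm_num) (hpos u)
  have hpos₂ : ∀ u : H, 0 ≤ (inner ℂ u (T₂ u) : ℂ).re := by
    intro u
    rw [hT₂]
    simp only [ContinuousLinearMap.smul_apply, inner_smul_right, hhalf,
      Complex.re_ofReal_mul, ContinuousLinearMap.add_apply, ContinuousLinearMap.id_apply,
      inner_add_right, Complex.add_re]
    have h1 : (0:ℝ) ≤ (inner ℂ u u : ℂ).re := by simpa using inner_self_nonneg (𝕜 := ℂ) (x := u)
    exact mul_nonneg (by norm_num) (add_nonneg h1 (hpos u))
  set a : Fin n → ℂ := fun j => (inner ℂ (h j) (A (h j)) : ℂ) with ha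
  set d : Fin n → ℂ := fun j => c j * Complex.exp (-(a j)/4) with hdd
  set Bm : Matrix (Fin n) (Fin n) ℂ :=
    Matrix.of fun j k => (inner ℂ (h j) (T₁ (h k)) : ℂ) + (inner ℂ (h k) (T₂ (h j)) : ℂ) with hBm
  have hBmpsd : Bm.PosSemidef := by
    have h1 := QuasifreeAux.gram_psd T₁ hT₁sa hpos₁ h
    have h2' := (QuasifreeAux.gram_psd T₂ hT₂sa hpos₂ h).transpose
    have : Bm = (Matrix.of fun j k => (inner ℂ (h j) (T₁ (h k)) : ℂ))
        + (Matrix.of fun j k => (inner ℂ (h j) (T₂ (h k)) : ℂ))ᵀ := by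
      ext j k
      rw [hBm]
      simp [Matrix.transpose_apply]
    rw [this]
    exact h1.add h2'
  have ha_conj : ∀ j, (starRingEnd ℂ) (a j) = a j := by
    intro j
    rw [ha]
    simp only
    rw [inner_conj_symm]
    exact hAsa _ _
  have hd : ∀ j, (starRingEnd ℂ) (d j) = (starRingEnd ℂ) (c j) * Complex.exp (-(a j)/4) := by
    intro j
    rw [hdd]
    simp only [_root_.map_mul]
    congr 1
    rw [← Complex.exp_conj]
    congr 1
    rw [map_div₀, map_neg, ha_conj, Complex.conj_ofNat]
  have hE : ∀ j k, (-(1 / 4 : ℂ) *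
            (inner ℂ (h j - h k) (A (h j - h k)) : ℂ)
          - (Complex.I / 2) * ((inner ℂ (h j) (h k) : ℂ).im : ℂ))
      = -(a j)/4 + (-(a k)/4 + Bm j k) := by
    intro j k
    have hw : (inner ℂ (h k) (h j) : ℂ) = (starRingEnd ℂ) (inner ℂ (h j) (h k) : ℂ) :=
      (inner_conj_symm _ _).symm
    have hz := Complex.sub_conj (inner ℂ (h j) (h k) : ℂ)
    push_cast at hz
    rw [ha, hBm]
    simp only [hA, hT₁, hT₂]
    simp only [Matrix.of_apply, two_smul, ContinuousLinearMap.add_apply,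
      ContinuousLinearMap.id_apply, ContinuousLinearMap.smul_apply, map_sub,
      inner_sub_left, inner_sub_right, inner_add_right, inner_smul_right, smul_eq_mul]
    rw [hw] at *
    linear_combination hz/4
  have hfinal : (Matrix.of fun j k : Fin n =>
      (starRingEnd ℂ) (c j) * c k *
        Complex.exp (-(1 / 4 : ℂ) *
            (inner ℂ (h j - h k) (A (h j - h k)) : ℂ)
          - (Complex.I / 2) * ((inner ℂ (h j) (h k) : ℂ).im : ℂ)))
      = (Matrix.of fun j k => (starRingEnd ℂ) (d j) * d k)
          ⊙ (Matrix.of fun j k => Complex.exp (Bm j k)) := by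
    ext j k
    simp only [Matrix.of_apply, Matrix.hadamard_apply]
    rw [hE j k, Complex.exp_add, Complex.exp_add, hd j, hdd]
    simp only
    ring
  rw [hfinal]
  exact QuasifreeAux.hadamard_psd (QuasifreeAux.rankOne_psd d) (QuasifreeAux.exp_entrywise_psd hBmpsd)
end
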